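/- Let (X, T) be a real Hausdorff locally convex topological vector space. Then X equipped with the Kelleyfication kT is a real compactly generated vector space: kT is a compactly generated topology, addition X × X → X is continuous from k(kT × kT) = k(T × T) to kT, and scalar multiplication ℝ × X → X is continuous from k(τ_ℝ × kT) to kT. In particular, if (X, T) is in addition sequentially complete, then (X, kT) is Seip-convenient. -/

import Mathlib

open Set Filter Topology

/-- The Kelleyfication of a topology `T`: a set is open iff its trace on every `T`-compact
set agrees with the trace of some `T`-open set. -/
def Kelley {X : Type*} (T : TopologicalSpace X) : TopologicalSpace X where
  IsOpen U := ∀ K : Set X, @IsCompact X T K → ∃ V : Set X, T.IsOpen V ∧ U ∩ K = V ∩ K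
  isOpen_univ K _ := ⟨univ, T.isOpen_univ, rfl⟩
  isOpen_inter := by
    intro s t hs ht K hK
    obtain ⟨Vs, hVs, hsK⟩ := hs K hK
    obtain ⟨Vt, hVt, htK⟩ := ht K hK
    refine ⟨Vs ∩ Vt, T.isOpen_inter _ _ hVs hVt, ?_⟩
    ext x
    have h1 := Set.ext_iff.mp hsK x
    have h2 := Set.ext_iff.mp htK x
    simp only [Set.mem_inter_iff] at *
    tauto
  isOpen_sUnion := by
    intro S hS K hK
    choose! V hV1 hV2 using fun t (ht : t ∈ S) => hS t ht K hK
    refine ⟨⋃ t ∈ S, V t, ?_, ?_⟩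
    · letI := T
      exact isOpen_biUnion fun t ht => hV1 t ht
    · ext x
      simp only [Set.mem_inter_iff, Set.mem_sUnion, Set.mem_iUnion, exists_prop]
      constructor
      · rintro ⟨⟨t, htS, hxt⟩, hxK⟩
        have h := Set.ext_iff.mp (hV2 t htS) x
        simp only [Set.mem_inter_iff] at h
        exact ⟨⟨t, htS, (h.mp ⟨hxt, hxK⟩).1⟩, hxK⟩
      · rintro ⟨⟨t, htS, hxt⟩, hxK⟩
        have h := Set.ext_iff.mp (hV2 t htS) x
        simp only [Set.mem_inter_iff] at h
        exact ⟨⟨t, htS, (h.mpr ⟨hxt, hxK⟩).1⟩, hxK⟩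

/-- The k-extension of a topology `T`: like the Kelleyfication, but quantifying only over
`T`-closed `T`-compact sets. -/
def KelleyEx {X : Type*} (T : TopologicalSpace X) : TopologicalSpace X where
  IsOpen U := ∀ K : Set X, @IsCompact X T K → @IsClosed X T K →
    ∃ V : Set X, T.IsOpen V ∧ U ∩ K = V ∩ K
  isOpen_univ K _ _ := ⟨univ, T.isOpen_univ, rfl⟩
  isOpen_inter := by
    intro s t hs ht K hK hKc
    obtain ⟨Vs, hVs, hsK⟩ := hs K hK hKc
    obtain ⟨Vt, hVt, htK⟩ := ht K hK hKc
    refine ⟨Vs ∩ Vt, T.isOpen_inter _ _ hVs hVt, ?_⟩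
    ext x
    have h1 := Set.ext_iff.mp hsK x
    have h2 := Set.ext_iff.mp htK x
    simp only [Set.mem_inter_iff] at *
    tauto
  isOpen_sUnion := by
    intro S hS K hK hKc
    choose! V hV1 hV2 using fun t (ht : t ∈ S) => hS t ht K hK hKc
    refine ⟨⋃ t ∈ S, V t, ?_, ?_⟩
    · letI := T
      exact isOpen_biUnion fun t ht => hV1 t ht
    · ext x
      simp only [Set.mem_inter_iff, Set.mem_sUnion, Set.mem_iUnion, exists_prop]
      constructor
      · rintro ⟨⟨t, htS, hxt⟩, hxK⟩
        have h := Set.ext_iff.mp (hV2 t htS) x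
        simp only [Set.mem_inter_iff] at h
        exact ⟨⟨t, htS, (h.mp ⟨hxt, hxK⟩).1⟩, hxK⟩
      · rintro ⟨⟨t, htS, hxt⟩, hxK⟩
        have h := Set.ext_iff.mp (hV2 t htS) x
        simp only [Set.mem_inter_iff] at h
        exact ⟨⟨t, htS, (h.mpr ⟨hxt, hxK⟩).1⟩, hxK⟩

/-- A topology is compactly generated iff it is Hausdorff and equals its Kelleyfication. -/
def IsCG {X : Type*} (T : TopologicalSpace X) : Prop :=
  @T2Space X T ∧ Kelley T = T

/-- Local compactness in the sense of the paper: every point of an open set `V` has an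
open neighbourhood contained in a compact subset of `V`. -/
def LocCompact {Y : Type*} (t : TopologicalSpace Y) : Prop :=
  ∀ y : Y, ∀ V : Set Y, t.IsOpen V → y ∈ V →
    ∃ K U : Set Y, y ∈ U ∧ t.IsOpen U ∧ U ⊆ K ∧ K ⊆ V ∧ @IsCompact Y t K

/-- A real compactly generated vector space: a compactly generated topology for which the
algebraic operations are continuous from the Kelleyfications of the product topologies. -/
def IsCGVS {X : Type*} [AddCommGroup X] [Module ℝ X] (T : TopologicalSpace X) : Prop :=
  IsCG T ∧
  Continuous[Kelley (@instTopologicalSpaceProd X X T T), T] (fun p : X × X => p.1 + p.2) ∧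
  Continuous[Kelley (@instTopologicalSpaceProd ℝ X inferInstance T), T]
    (fun p : ℝ × X => p.1 • p.2)

/-- Sequential completeness of a topologized additive group: every Cauchy sequence converges. -/
def SeqComplete {X : Type*} [AddCommGroup X] (U : TopologicalSpace X) : Prop :=
  ∀ u : ℕ → X, (∀ V ∈ @nhds X U 0, ∃ N : ℕ, ∀ m ≥ N, ∀ n ≥ N, u m - u n ∈ V) →
    ∃ x : X, Filter.Tendsto u Filter.atTop (@nhds X U x)

/-- Seip-convenient space: a compactly generated real vector space whose topology is the
Kelleyfication of a sequentially complete Hausdorff locally convex vector topology. -/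
def IsSeipConvenient {X : Type*} [AddCommGroup X] [Module ℝ X] (T : TopologicalSpace X) : Prop :=
  IsCGVS T ∧ ∃ U : TopologicalSpace X,
    @IsTopologicalAddGroup X U _ ∧ @ContinuousSMul ℝ X _ _ U ∧
    @LocallyConvexSpace ℝ X _ _ _ _ U ∧ @T2Space X U ∧ SeqComplete U ∧ T = Kelley U

/-- The compact-open topology on the full function space, generated by the usual subbasis. -/
def coTop {X Y : Type*} (tX : TopologicalSpace X) (tY : TopologicalSpace Y) :
    TopologicalSpace (X → Y) :=
  TopologicalSpace.generateFrom
    {S | ∃ (K : Set X) (V : Set Y), @IsCompact X tX K ∧ tY.IsOpen V ∧ S = {f | f '' K ⊆ V}}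

/-- `γ` is Riemann integrable to `x` on `[a,b]` with respect to the topology `T`. -/
def RiemannIntegrableTo {E : Type*} [AddCommGroup E] [Module ℝ E]
    (T : TopologicalSpace E) (a b : ℝ) (γ : ℝ → E) (x : E) : Prop :=
  ∀ V ∈ @nhds E T x, ∃ δ : ℝ, 0 < δ ∧ ∀ (k : ℕ) (t s : ℕ → ℝ),
    t 0 = a → t k = b → (∀ i < k, t i ≤ t (i + 1)) →
    (∀ i < k, t (i + 1) - t i < δ) →
    (∀ i < k, t i ≤ s i ∧ s i ≤ t (i + 1)) →
    (∑ i ∈ Finset.range k, (t (i + 1) - t i) • γ (s i)) ∈ V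

/-- `c` is differentiable to `x` at `t₀` (within `J`) with respect to the topology `T`. -/
def DiffTo {E : Type*} [AddCommGroup E] [Module ℝ E] (T : TopologicalSpace E)
    (J : Set ℝ) (c : ℝ → E) (t₀ : ℝ) (x : E) : Prop :=
  ∀ V ∈ @nhds E T x, ∃ δ : ℝ, 0 < δ ∧ ∀ t : ℝ, t₀ + t ∈ J → 0 < |t| → |t| < δ →
    t⁻¹ • (c (t₀ + t) - c t₀) ∈ V

lemma kelley_isOpen {X : Type*} {T : TopologicalSpace X} {U : Set X} (hU : T.IsOpen U) :
    (Kelley T).IsOpen U := fun K _ => ⟨U, hU, rfl⟩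

/-- If every `σ`-open set traces like a `τ`-open set on `τ`-compacts, then `τ`-compact
sets are `σ`-compact. -/
lemma compact_of_trace {X : Type*} {τ σ : TopologicalSpace X}
    (hσ : ∀ U, σ.IsOpen U → ∀ K, @IsCompact X τ K → ∃ V, τ.IsOpen V ∧ U ∩ K = V ∩ K)
    {K : Set X} (hK : @IsCompact X τ K) : @IsCompact X σ K := by
  refine @isCompact_of_finite_subcover X σ K ?_
  intro ι U hU hcov
  choose V hV hVK using fun i => hσ (U i) (hU i) K hK
  have hcov' : K ⊆ ⋃ i, V i := by
    intro x hx
    obtain ⟨i, hxi⟩ := mem_iUnion.mp (hcov hx)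
    have hx' : x ∈ V i ∩ K := by rw [← hVK i]; exact ⟨hxi, hx⟩
    exact mem_iUnion.mpr ⟨i, hx'.1⟩
  obtain ⟨t, ht⟩ : ∃ t : Finset ι, K ⊆ ⋃ i ∈ t, V i := by
    letI := τ
    exact hK.elim_finite_subcover V hV hcov'
  refine ⟨t, fun x hx => ?_⟩
  obtain ⟨i, hi, hxi⟩ := mem_iUnion₂.mp (ht hx)
  have hx' : x ∈ U i ∩ K := by rw [hVK i]; exact ⟨hxi, hx⟩
  exact mem_iUnion₂.mpr ⟨i, hi, hx'.1⟩

/-- If `τ`-opens are `σ`-open and `σ`-opens trace like `τ`-opens on `τ`-compacts,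
then the Kelleyfications coincide. -/
lemma kelley_eq_of_trace {X : Type*} {τ σ : TopologicalSpace X}
    (h1 : ∀ U, τ.IsOpen U → σ.IsOpen U)
    (h2 : ∀ U, σ.IsOpen U → ∀ K, @IsCompact X τ K → ∃ V, τ.IsOpen V ∧ U ∩ K = V ∩ K) :
    Kelley σ = Kelley τ := by
  have hc1 : ∀ K, @IsCompact X τ K → @IsCompact X σ K := fun K hK => compact_of_trace h2 hK
  have hc2 : ∀ K, @IsCompact X σ K → @IsCompact X τ K := fun K hK =>
    compact_of_trace (fun U hU K' _ => ⟨U, h1 U hU, rfl⟩) hK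
  refine TopologicalSpace.ext ?_
  ext U
  constructor
  · intro hU K hK
    obtain ⟨V, hV, hVK⟩ := hU K (hc1 K hK)
    obtain ⟨W, hW, hWK⟩ := h2 V hV K hK
    exact ⟨W, hW, hVK.trans hWK⟩
  · intro hU K hK
    obtain ⟨V, hV, hVK⟩ := hU K (hc2 K hK)
    exact ⟨V, h1 V hV, hVK⟩

lemma kelley_idem {X : Type*} (T : TopologicalSpace X) : Kelley (Kelley T) = Kelley T :=
  kelley_eq_of_trace (fun _ hU => kelley_isOpen hU) (fun _ hU => hU)

/-- Continuity is preserved by Kelleyfication. -/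
lemma kelley_continuous {X Y : Type*} {tX : TopologicalSpace X} {tY : TopologicalSpace Y}
    {f : X → Y} (hf : Continuous[tX, tY] f) : Continuous[Kelley tX, Kelley tY] f := by
  refine (@continuous_def X Y (Kelley tX) (Kelley tY) f).mpr ?_
  intro U hU K hK
  obtain ⟨V, hV, hVK⟩ := hU (f '' K) (@IsCompact.image X Y tX tY K f hK hf)
  refine ⟨f ⁻¹' V, (@continuous_def X Y tX tY f).mp hf V hV, ?_⟩
  ext x
  simp only [Set.mem_inter_iff, Set.mem_preimage]
  constructor
  · rintro ⟨hxU, hxK⟩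
    have : f x ∈ V ∩ f '' K := by rw [← hVK]; exact ⟨hxU, ⟨x, hxK, rfl⟩⟩
    exact ⟨this.1, hxK⟩
  · rintro ⟨hxV, hxK⟩
    have : f x ∈ U ∩ f '' K := by rw [hVK]; exact ⟨hxV, ⟨x, hxK, rfl⟩⟩
    exact ⟨this.1, hxK⟩

/-- Trace lemma for products: an open set of the product of finer topologies traces like a
product-open set on products of compacts. -/
lemma prod_trace {A X : Type*} {tA sA : TopologicalSpace A} {tX sX : TopologicalSpace X}
    (hA : ∀ U, sA.IsOpen U → ∀ K, @IsCompact A tA K → ∃ V, tA.IsOpen V ∧ U ∩ K = V ∩ K)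
    (hX : ∀ U, sX.IsOpen U → ∀ K, @IsCompact X tX K → ∃ V, tX.IsOpen V ∧ U ∩ K = V ∩ K)
    {KA : Set A} {KX : Set X} (hKA : @IsCompact A tA KA) (hKX : @IsCompact X tX KX)
    {U : Set (A × X)} (hU : (@instTopologicalSpaceProd A X sA sX).IsOpen U) :
    ∃ W, (@instTopologicalSpaceProd A X tA tX).IsOpen W ∧
      U ∩ KA ×ˢ KX = W ∩ KA ×ˢ KX := by
  have h := (@isOpen_prod_iff A X sA sX U).mp hU
  have key : ∀ p : A × X, p ∈ U ∩ KA ×ˢ KX → ∃ u v, tA.IsOpen u ∧ tX.IsOpen v ∧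
      p.1 ∈ u ∧ p.2 ∈ v ∧ ∀ a x, a ∈ u → a ∈ KA → x ∈ v → x ∈ KX → (a, x) ∈ U := by
    rintro ⟨a, x⟩ ⟨hpU, hpa, hpx⟩
    obtain ⟨u, v, hu, hv, hau, hxv, huv⟩ := h a x hpU
    obtain ⟨u', hu', huu'⟩ := hA u hu KA hKA
    obtain ⟨v', hv', hvv'⟩ := hX v hv KX hKX
    refine ⟨u', v', hu', hv', ?_, ?_, ?_⟩
    · exact ((Set.ext_iff.mp huu' a).mp ⟨hau, hpa⟩).1
    · exact ((Set.ext_iff.mp hvv' x).mp ⟨hxv, hpx⟩).1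
    · intro a' x' ha' haK hx' hxK
      have h1 : a' ∈ u := ((Set.ext_iff.mp huu' a').mpr ⟨ha', haK⟩).1
      have h2 : x' ∈ v := ((Set.ext_iff.mp hvv' x').mpr ⟨hx', hxK⟩).1
      exact huv ⟨h1, h2⟩
  choose! u v hu hv hp1 hp2 hsub using key
  refine ⟨⋃ p ∈ U ∩ KA ×ˢ KX, u p ×ˢ v p, ?_, ?_⟩
  · exact @isOpen_biUnion (A × X) (A × X) (@instTopologicalSpaceProd A X tA tX) _ _
      (fun p hp => @IsOpen.prod A X tA tX _ _ (hu p hp) (hv p hp))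
  · ext ⟨a, x⟩
    simp only [Set.mem_inter_iff, Set.mem_iUnion, Set.mem_prod, exists_prop]
    constructor
    · rintro ⟨hU', haK, hxK⟩
      have hmem : (a, x) ∈ U ∩ KA ×ˢ KX := ⟨hU', haK, hxK⟩
      exact ⟨⟨(a, x), hmem, hp1 _ hmem, hp2 _ hmem⟩, haK, hxK⟩
    · rintro ⟨⟨p, hpmem, hau, hxv⟩, haK, hxK⟩
      exact ⟨hsub p hpmem a x hau haK hxv hxK, haK, hxK⟩

/-- Kelleyfication of a product only depends on the topologies up to Kelley-equivalence
of the factors. -/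
lemma kelley_prod_eq {A X : Type*} {tA sA : TopologicalSpace A} {tX sX : TopologicalSpace X}
    (h1A : ∀ U, tA.IsOpen U → sA.IsOpen U)
    (h2A : ∀ U, sA.IsOpen U → ∀ K, @IsCompact A tA K → ∃ V, tA.IsOpen V ∧ U ∩ K = V ∩ K)
    (h1X : ∀ U, tX.IsOpen U → sX.IsOpen U)
    (h2X : ∀ U, sX.IsOpen U → ∀ K, @IsCompact X tX K → ∃ V, tX.IsOpen V ∧ U ∩ K = V ∩ K) :
    Kelley (@instTopologicalSpaceProd A X sA sX) =
    Kelley (@instTopologicalSpaceProd A X tA tX) := by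
  refine kelley_eq_of_trace ?_ ?_
  · -- (tA × tX)-open sets are (sA × sX)-open
    intro U hU
    have hle : (@instTopologicalSpaceProd A X sA sX) ≤ (@instTopologicalSpaceProd A X tA tX) := by
      refine le_inf (le_trans inf_le_left (induced_mono ?_)) (le_trans inf_le_right (induced_mono ?_))
      · exact fun V hV => h1A V hV
      · exact fun V hV => h1X V hV
    exact hle U hU
  · intro U hU K hK
    set KA : Set A := Prod.fst '' K with hKAdef
    set KX : Set X := Prod.snd '' K with hKXdef
    have hKA : @IsCompact A tA KA :=
      @IsCompact.image (A × X) A (@instTopologicalSpaceProd A X tA tX) tA K Prod.fst hK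
        (@continuous_fst A X tA tX)
    have hKX : @IsCompact X tX KX :=
      @IsCompact.image (A × X) X (@instTopologicalSpaceProd A X tA tX) tX K Prod.snd hK
        (@continuous_snd A X tA tX)
    obtain ⟨W, hW, hWK⟩ := prod_trace h2A h2X hKA hKX hU
    refine ⟨W, hW, ?_⟩
    have hKsub : K ⊆ KA ×ˢ KX := fun p hp => ⟨⟨p, hp, rfl⟩, ⟨p, hp, rfl⟩⟩
    ext p
    constructor
    · rintro ⟨hpU, hpK⟩
      have : p ∈ W ∩ KA ×ˢ KX := by rw [← hWK]; exact ⟨hpU, hKsub hpK⟩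
      exact ⟨this.1, hpK⟩
    · rintro ⟨hpW, hpK⟩
      have : p ∈ U ∩ KA ×ˢ KX := by rw [hWK]; exact ⟨hpW, hKsub hpK⟩
      exact ⟨this.1, hpK⟩

/-- The Kelleyfication of a real Hausdorff locally convex topological vector
space is a real compactly generated vector space; if moreover the space is sequentially
complete, the Kelleyfication is Seip-convenient. -/
theorem kelley_of_lcs_isCGVS {X : Type*} [AddCommGroup X] [Module ℝ X]
    (T : TopologicalSpace X)
    (h1 : @IsTopologicalAddGroup X T _) (h2 : @ContinuousSMul ℝ X _ _ T)
    (h3 : @LocallyConvexSpace ℝ X _ _ _ _ T) (h4 : @T2Space X T) :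
    IsCGVS (Kelley T) ∧ (SeqComplete T → IsSeipConvenient (Kelley T)) := by
  -- Hausdorffness of the Kelleyfication
  have hT2 : @T2Space X (Kelley T) := by
    refine @T2Space.mk X (Kelley T) ?_
    intro x y hxy
    obtain ⟨u, v, hu, hv, hxu, hyv, huv⟩ := @t2_separation X T h4 x y hxy
    exact ⟨u, v, kelley_isOpen hu, kelley_isOpen hv, hxu, hyv, huv⟩
  have hcg : IsCG (Kelley T) := ⟨hT2, kelley_idem T⟩
  -- the Kelleyfications of the relevant product topologies agree
  have hXX : Kelley (@instTopologicalSpaceProd X X (Kelley T) (Kelley T)) =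
      Kelley (@instTopologicalSpaceProd X X T T) :=
    kelley_prod_eq (fun _ hU => kelley_isOpen hU) (fun _ hU => hU)
      (fun _ hU => kelley_isOpen hU) (fun _ hU => hU)
  have hRX : Kelley (@instTopologicalSpaceProd ℝ X inferInstance (Kelley T)) =
      Kelley (@instTopologicalSpaceProd ℝ X inferInstance T) :=
    kelley_prod_eq (fun _ hU => hU) (fun U hU K _ => ⟨U, hU, rfl⟩)
      (fun _ hU => kelley_isOpen hU) (fun _ hU => hU)
  -- continuity of the operations for the original topology
  have haddc : Continuous[@instTopologicalSpaceProd X X T T, T]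
      (fun p : X × X => p.1 + p.2) := by
    letI := T
    exact continuous_add
  have hsmulc : Continuous[@instTopologicalSpaceProd ℝ X inferInstance T, T]
      (fun p : ℝ × X => p.1 • p.2) := by
    letI := T
    exact continuous_smul
  have hcgvs : IsCGVS (Kelley T) := by
    refine ⟨hcg, ?_, ?_⟩
    · rw [hXX]; exact kelley_continuous haddc
    · rw [hRX]; exact kelley_continuous hsmulc
  exact ⟨hcgvs, fun hs => ⟨hcgvs, T, h1, h2, h3, h4, hs, rfl⟩⟩
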